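/- Let X be an infinite Noetherian T1 topological space and f : X → X a continuous map. Let P : ℕ → X be a complete backward f-branch, i.e., f(P(n+1)) = P(n) for all n ≥ 0. If the forward orbit O_f(P(0)) is dense in X, then the set {P(n) : n ∈ ℕ} is dense in X. -/

import Mathlib

/-- The forward orbit of `x` under `f`: all iterates `f^[n] x` for `n ≥ 0`. -/
def fwdOrbit {X : Type*} (f : X → X) (x : X) : Set X := Set.range fun n => f^[n] x

/-- On an infinite Noetherian T1 space, a complete backward branch of a point with
dense forward orbit is itself dense. -/
theorem backward_branch_dense {X : Type*} [TopologicalSpace X] [T1Space X]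
    [TopologicalSpace.NoetherianSpace X] [Infinite X] (f : X → X)
    (hf : Continuous f) (P : ℕ → X) (hbranch : ∀ n : ℕ, f (P (n + 1)) = P n)
    (hdense : Dense (fwdOrbit f (P 0))) : Dense (Set.range P) := by
  classical
  -- tails and their closures
  set C : ℕ → TopologicalSpace.Closeds X :=
    fun n => TopologicalSpace.Closeds.closure (P '' Set.Ici n) with hCdef
  have hanti : Antitone C := fun m n hmn =>
    TopologicalSpace.Closeds.gc.monotone_l (Set.image_mono (Set.Ici_subset_Ici.2 hmn))
  -- the descending chain stabilizes
  obtain ⟨N, hN, hNmin⟩ := (wellFounded_lt (α := TopologicalSpace.Closeds X)).has_min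
      (Set.range C) (Set.range_nonempty C)
  obtain ⟨N, rfl⟩ := hN
  have hstab : ∀ n, N ≤ n → C n = C N := fun n hn =>
    (hanti hn).lt_or_eq.resolve_left (hNmin _ (Set.mem_range_self n))
  -- f maps the tail at level n+1 onto the tail at level n
  have himg : ∀ n, f '' (P '' Set.Ici (n + 1)) = P '' Set.Ici n := by
    intro n
    ext x
    constructor
    · rintro ⟨y, ⟨k, hk, rfl⟩, rfl⟩
      obtain ⟨m, rfl⟩ := Nat.exists_eq_add_of_le hk
      exact ⟨n + m, Set.mem_Ici.mpr (Nat.le_add_right n m), by rw [← hbranch (n + m)]; ring_nf⟩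
    · rintro ⟨k, hk, rfl⟩
      exact ⟨P (k + 1), ⟨k + 1, Set.mem_Ici.mpr (Nat.succ_le_succ hk), rfl⟩, hbranch k⟩
  -- C N is f-invariant
  have hinv : f '' (C N : Set X) ⊆ (C N : Set X) := by
    calc f '' (C N : Set X)
        = f '' (C (N + 1) : Set X) := by rw [hstab (N + 1) (Nat.le_succ N)]
      _ ⊆ closure (f '' (P '' Set.Ici (N + 1))) := image_closure_subset_closure_image hf
      _ = closure (P '' Set.Ici N) := by rw [himg N]
      _ = (C N : Set X) := rfl
  -- P 0 ∈ C N, since P 0 = f^[N] (P N)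
  have hiter : ∀ n x, x ∈ (C N : Set X) → f^[n] x ∈ (C N : Set X) := by
    intro n
    induction n with
    | zero => exact fun x hx => hx
    | succ n ih =>
      intro x hx
      rw [Function.iterate_succ_apply]
      exact ih _ (hinv ⟨x, hx, rfl⟩)
  have hP0iter : ∀ n, f^[n] (P n) = P 0 := by
    intro n
    induction n with
    | zero => rfl
    | succ n ih => rw [Function.iterate_succ_apply, hbranch n, ih]
  have hPN : P N ∈ (C N : Set X) :=
    subset_closure ⟨N, Set.self_mem_Ici, rfl⟩
  have hP0 : P 0 ∈ (C N : Set X) := by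
    rw [← hP0iter N]; exact hiter N _ hPN
  -- forward orbit of P 0 lies in C N
  have horb : fwdOrbit f (P 0) ⊆ (C N : Set X) := by
    rintro _ ⟨n, rfl⟩
    exact hiter n _ hP0
  -- hence C N = univ
  have huniv : (C N : Set X) = Set.univ := by
    apply Set.eq_univ_of_univ_subset
    have := closure_mono horb
    rw [hdense.closure_eq] at this
    simpa [(C N).isClosed.closure_eq] using this
  -- conclude
  have : (C N : Set X) ⊆ closure (Set.range P) :=
    closure_mono (Set.image_subset_range P _)
  rw [huniv] at this
  exact fun x => this (Set.mem_univ x)
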